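/- (Theorem: semi-invariants of filtered D_r-Dynkin quivers.) Let n ≥ 1 and r ≥ 4, and let Q be an arbitrary orientation of the D_r-Dynkin graph: vertices 1,…,r and arrows a_1,…,a_{r−1}, where for 1 ≤ α ≤ r−2 the endpoint set of a_α is {α, α+1}, and the endpoint set of a_{r−1} is {r−2, r}. Let U_n^r act on 𝔟_n^{⊕(r−1)} by (u_1,…,u_r)·(A_1,…,A_{r−1}) = (u_{h(a_α)} A_α u_{t(a_α)}^{−1})_{α}. Then a polynomial function f on 𝔟_n^{⊕(r−1)} is invariant under this action if and only if there is a polynomial g in (r−1)·n variables such that f(A_1,…,A_{r−1}) = g(((A_α)_{ii})_{1≤α≤r−1, 1≤i≤n}) for all tuples of upper triangular matrices; that is, ℂ[F•Rep(Q,β)]^{𝕌_β} = ℂ[𝔱_n^{⊕(r−1)}] for β = (n,…,n). -/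
import Mathlib


/-- `M` is an upper triangular complex matrix (an element of `𝔟ₙ`). -/
def IsUT {n : ℕ} (M : Matrix (Fin n) (Fin n) ℂ) : Prop :=
  ∀ i j : Fin n, j < i → M i j = 0

/-- `M` is a unipotent upper triangular complex matrix (an element of `Uₙ`). -/
def IsUnipUT {n : ℕ} (M : Matrix (Fin n) (Fin n) ℂ) : Prop :=
  IsUT M ∧ ∀ i : Fin n, M i i = 1

namespace SemiInvDr

open Matrix MvPolynomial

variable {n : ℕ}

lemma isUT_bt {M : Matrix (Fin n) (Fin n) ℂ} (h : IsUT M) : M.BlockTriangular id :=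
  fun i j hij => h i j hij

lemma utMul {A B : Matrix (Fin n) (Fin n) ℂ} (hA : IsUT A) (hB : IsUT B) :
    IsUT (A * B) := fun i j hij => (isUT_bt hA).mul (isUT_bt hB) hij

lemma mul_diag {A B : Matrix (Fin n) (Fin n) ℂ} (hA : IsUT A) (hB : IsUT B) (i : Fin n) :
    (A * B) i i = A i i * B i i := by
  rw [Matrix.mul_apply]
  apply Finset.sum_eq_single
  · intro k _ hk
    rcases lt_or_gt_of_ne hk with h | h
    · rw [hA i k h, zero_mul]
    · rw [hB k i h, mul_zero]
  · intro h; exact absurd (Finset.mem_univ i) h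

lemma det_eq {A : Matrix (Fin n) (Fin n) ℂ} (hA : IsUT A) : A.det = ∏ i, A i i :=
  Matrix.det_of_upperTriangular (isUT_bt hA)

lemma isUnit_det {A : Matrix (Fin n) (Fin n) ℂ} (hA : IsUT A) (h : ∀ i, A i i ≠ 0) :
    IsUnit A.det := by
  rw [det_eq hA, isUnit_iff_ne_zero]
  exact Finset.prod_ne_zero_iff.mpr fun i _ => h i

lemma inv_isUT {A : Matrix (Fin n) (Fin n) ℂ} (hA : IsUT A) (h : IsUnit A.det) :
    IsUT A⁻¹ := by
  haveI := A.invertibleOfIsUnitDet h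
  exact fun i j hij => Matrix.blockTriangular_inv_of_blockTriangular (isUT_bt hA) hij

lemma inv_diag {A : Matrix (Fin n) (Fin n) ℂ} (hA : IsUT A) (h : ∀ i, A i i ≠ 0) (i : Fin n) :
    A⁻¹ i i = (A i i)⁻¹ := by
  have h1 : (A⁻¹ * A) i i = 1 := by rw [Matrix.nonsing_inv_mul A (isUnit_det hA h)]; simp
  rw [mul_diag (inv_isUT hA (isUnit_det hA h)) hA] at h1
  exact eq_inv_of_mul_eq_one_left h1

lemma unipDet {u : Matrix (Fin n) (Fin n) ℂ} (hu : IsUnipUT u) : IsUnit u.det := by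
  apply isUnit_det hu.1; intro i; rw [hu.2 i]; exact one_ne_zero

lemma unipInv {u : Matrix (Fin n) (Fin n) ℂ} (hu : IsUnipUT u) : IsUnipUT u⁻¹ := by
  have hne : ∀ i : Fin n, u i i ≠ 0 := fun i => by rw [hu.2 i]; exact one_ne_zero
  refine ⟨inv_isUT hu.1 (unipDet hu), fun i => ?_⟩
  rw [inv_diag hu.1 hne, hu.2 i, inv_one]

/-- diagonal part of a matrix -/
noncomputable def Dm (A : Matrix (Fin n) (Fin n) ℂ) : Matrix (Fin n) (Fin n) ℂ :=
  Matrix.diagonal (fun i => A i i)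

lemma Dm_isUT (A : Matrix (Fin n) (Fin n) ℂ) : IsUT (Dm A) := by
  intro i j hij
  exact Matrix.diagonal_apply_ne _ (ne_of_gt hij)

lemma Dm_diag (A : Matrix (Fin n) (Fin n) ℂ) (i : Fin n) : Dm A i i = A i i :=
  Matrix.diagonal_apply_eq _ i

lemma Dm_apply (A : Matrix (Fin n) (Fin n) ℂ) (i j : Fin n) :
    Dm A i j = if i = j then A i i else 0 := Matrix.diagonal_apply _ i j

lemma Dm_det {A : Matrix (Fin n) (Fin n) ℂ} (h : ∀ i, A i i ≠ 0) : IsUnit (Dm A).det :=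
  isUnit_det (Dm_isUT A) (fun i => by rw [Dm_diag]; exact h i)

lemma key1 {A M : Matrix (Fin n) (Fin n) ℂ} (hA : IsUT A) (hd : ∀ i, A i i ≠ 0)
    (hM : IsUnipUT M) :
    IsUnipUT (Dm A * M * A⁻¹) ∧ (Dm A * M * A⁻¹) * A * M⁻¹ = Dm A := by
  have hA' : IsUnit A.det := isUnit_det hA hd
  have hAinv : IsUT A⁻¹ := inv_isUT hA hA'
  constructor
  · refine ⟨utMul (utMul (Dm_isUT A) hM.1) hAinv, fun i => ?_⟩
    rw [mul_diag (utMul (Dm_isUT A) hM.1) hAinv, mul_diag (Dm_isUT A) hM.1,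
      Dm_diag, hM.2, inv_diag hA hd, mul_one]
    exact mul_inv_cancel₀ (hd i)
  · rw [Matrix.mul_assoc (Dm A * M) A⁻¹ A, Matrix.nonsing_inv_mul A hA', Matrix.mul_one,
      Matrix.mul_assoc (Dm A) M M⁻¹, Matrix.mul_nonsing_inv M (unipDet hM), Matrix.mul_one]

lemma key2 {A M : Matrix (Fin n) (Fin n) ℂ} (hA : IsUT A) (hd : ∀ i, A i i ≠ 0)
    (hM : IsUnipUT M) :
    IsUnipUT ((Dm A)⁻¹ * M * A) ∧ M * A * ((Dm A)⁻¹ * M * A)⁻¹ = Dm A := by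
  have hA' : IsUnit A.det := isUnit_det hA hd
  have hDd : ∀ i : Fin n, Dm A i i ≠ 0 := fun i => by rw [Dm_diag]; exact hd i
  have hD' : IsUnit (Dm A).det := Dm_det hd
  have hDinv : IsUT (Dm A)⁻¹ := inv_isUT (Dm_isUT A) hD'
  constructor
  · refine ⟨utMul (utMul hDinv hM.1) hA, fun i => ?_⟩
    rw [mul_diag (utMul hDinv hM.1) hA, mul_diag hDinv hM.1,
      inv_diag (Dm_isUT A) hDd, Dm_diag, hM.2, mul_one]
    exact inv_mul_cancel₀ (hd i)
  · rw [Matrix.mul_inv_rev, Matrix.mul_inv_rev, Matrix.nonsing_inv_nonsing_inv _ hD']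
    rw [Matrix.mul_assoc M A, Matrix.mul_nonsing_inv_cancel_left A _ hA',
      Matrix.mul_nonsing_inv_cancel_left M _ (unipDet hM)]

end SemiInvDr

namespace SemiInvDr

variable {n : ℕ}

/-- the unipotent matrices along the path 0,1,...,r-2 -/
noncomputable def uP (r : ℕ) (hd : Fin (r - 1) → Fin r)
    (A : Fin (r - 1) → Matrix (Fin n) (Fin n) ℂ) : ℕ → Matrix (Fin n) (Fin n) ℂ
  | 0 => 1
  | v + 1 =>
    if h : v < r - 1 then
      if (hd ⟨v, h⟩ : ℕ) = v + 1 then Dm (A ⟨v, h⟩) * uP r hd A v * (A ⟨v, h⟩)⁻¹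
      else (Dm (A ⟨v, h⟩))⁻¹ * uP r hd A v * A ⟨v, h⟩
    else 1

/-- the unipotent matrices at all vertices (vertex r-1 attached to r-3 via arrow r-2) -/
noncomputable def uV (r : ℕ) (hr : 4 ≤ r) (hd : Fin (r - 1) → Fin r)
    (A : Fin (r - 1) → Matrix (Fin n) (Fin n) ℂ) (v : ℕ) : Matrix (Fin n) (Fin n) ℂ :=
  if v = r - 1 then
    if (hd ⟨r - 2, by omega⟩ : ℕ) = r - 1 then
      Dm (A ⟨r - 2, by omega⟩) * uP r hd A (r - 3) * (A ⟨r - 2, by omega⟩)⁻¹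
    else (Dm (A ⟨r - 2, by omega⟩))⁻¹ * uP r hd A (r - 3) * A ⟨r - 2, by omega⟩
  else uP r hd A v

lemma one_unip : IsUnipUT (1 : Matrix (Fin n) (Fin n) ℂ) :=
  ⟨fun i j hij => Matrix.one_apply_ne (ne_of_gt hij), fun i => Matrix.one_apply_eq i⟩

lemma uP_unip {r : ℕ} {hd : Fin (r - 1) → Fin r}
    {A : Fin (r - 1) → Matrix (Fin n) (Fin n) ℂ}
    (hA : ∀ α, IsUT (A α)) (hA0 : ∀ α i, A α i i ≠ 0) :
    ∀ v, IsUnipUT (uP r hd A v) := by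
  intro v
  induction v with
  | zero => exact one_unip
  | succ v ih =>
    rw [uP]
    split
    · split
      · exact (key1 (hA _) (hA0 _) ih).1
      · exact (key2 (hA _) (hA0 _) ih).1
    · exact one_unip

lemma uV_unip {r : ℕ} (hr : 4 ≤ r) {hd : Fin (r - 1) → Fin r}
    {A : Fin (r - 1) → Matrix (Fin n) (Fin n) ℂ}
    (hA : ∀ α, IsUT (A α)) (hA0 : ∀ α i, A α i i ≠ 0) :
    ∀ v, IsUnipUT (uV r hr hd A v) := by
  intro v
  rw [uV]
  split
  · split
    · exact (key1 (hA _) (hA0 _) (uP_unip hA hA0 _)).1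
    · exact (key2 (hA _) (hA0 _) (uP_unip hA hA0 _)).1
  · exact uP_unip hA hA0 v

lemma uV_ne {r : ℕ} (hr : 4 ≤ r) {hd : Fin (r - 1) → Fin r}
    {A : Fin (r - 1) → Matrix (Fin n) (Fin n) ℂ} {v : ℕ} (hv : v ≠ r - 1) :
    uV r hr hd A v = uP r hd A v := if_neg hv

/-- the key relation: the action by `uV` diagonalizes each `A α`. -/
lemma uV_rel {r : ℕ} (hr : 4 ≤ r) {tl hd : Fin (r - 1) → Fin r}
    (hor : ∀ α : Fin (r - 1),
      ((α : ℕ) < r - 2 →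
        (((tl α : ℕ) = (α : ℕ) ∧ (hd α : ℕ) = (α : ℕ) + 1) ∨
         ((tl α : ℕ) = (α : ℕ) + 1 ∧ (hd α : ℕ) = (α : ℕ)))) ∧
      ((α : ℕ) = r - 2 →
        (((tl α : ℕ) = r - 3 ∧ (hd α : ℕ) = r - 1) ∨
         ((tl α : ℕ) = r - 1 ∧ (hd α : ℕ) = r - 3))))
    {A : Fin (r - 1) → Matrix (Fin n) (Fin n) ℂ}
    (hA : ∀ α, IsUT (A α)) (hA0 : ∀ α i, A α i i ≠ 0) (α : Fin (r - 1)) :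
    uV r hr hd A (hd α : ℕ) * A α * (uV r hr hd A (tl α : ℕ))⁻¹ = Dm (A α) := by
  have hα : (α : ℕ) < r - 1 := α.isLt
  have hfin : (⟨(α : ℕ), hα⟩ : Fin (r - 1)) = α := Fin.eta α hα
  by_cases hc : (α : ℕ) < r - 2
  · rcases (hor α).1 hc with ⟨h1, h2⟩ | ⟨h1, h2⟩
    · -- tl = α, hd = α + 1
      rw [h1, h2, uV_ne hr (by omega), uV_ne hr (by omega), uP,
        dif_pos hα, hfin, if_pos h2]
      exact (key1 (hA α) (hA0 α) (uP_unip (fun β => hA β) hA0 (α : ℕ))).2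
    · -- tl = α + 1, hd = α
      rw [h1, h2, uV_ne hr (by omega), uV_ne hr (by omega), uP,
        dif_pos hα, hfin, if_neg (by omega)]
      exact (key2 (hA α) (hA0 α) (uP_unip (fun β => hA β) hA0 (α : ℕ))).2
  · have hc2 : (α : ℕ) = r - 2 := by omega
    have hfin2 : (⟨r - 2, by omega⟩ : Fin (r - 1)) = α := by
      apply Fin.ext; simp [hc2]
    rcases (hor α).2 hc2 with ⟨h1, h2⟩ | ⟨h1, h2⟩
    · -- tl = r - 3, hd = r - 1
      have e1 : uV r hr hd A (r - 3) = uP r hd A (r - 3) :=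
        uV_ne hr (by omega)
      have e2 : uV r hr hd A (r - 1) = Dm (A α) * uP r hd A (r - 3) * (A α)⁻¹ := by
        rw [uV, if_pos rfl, hfin2, if_pos h2]
      rw [h1, h2, e1, e2]
      exact (key1 (hA α) (hA0 α) (uP_unip (fun β => hA β) hA0 (r - 3))).2
    · -- tl = r - 1, hd = r - 3
      have e1 : uV r hr hd A (r - 3) = uP r hd A (r - 3) :=
        uV_ne hr (by omega)
      have e2 : uV r hr hd A (r - 1) = (Dm (A α))⁻¹ * uP r hd A (r - 3) * A α := by
        rw [uV, if_pos rfl, hfin2, if_neg (by omega)]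
      rw [h1, h2, e1, e2]
      exact (key2 (hA α) (hA0 α) (uP_unip (fun β => hA β) hA0 (r - 3))).2

lemma eval_bind₁' {σ τ : Type*} (f : τ → ℂ) (g : σ → MvPolynomial τ ℂ)
    (φ : MvPolynomial σ ℂ) :
    MvPolynomial.eval f (MvPolynomial.bind₁ g φ) =
      MvPolynomial.eval (fun i => MvPolynomial.eval f (g i)) φ := by
  simpa using MvPolynomial.aeval_bind₁ f g φ

end SemiInvDr


open SemiInvDr MvPolynomial in
/-- Semi-invariants of filtered `D_r`-Dynkin quivers:
for any orientation of the `D_r`-Dynkin graph (vertices `Fin r` in 0-indexed form,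
arrows `Fin (r-1)`; for `α < r-2` the `α`-th arrow joins `α` and `α+1`, and the last
arrow (index `r-2`) joins `r-3` and `r-1`), a polynomial function on `𝔟ₙ^{⊕(r-1)}` is
invariant under the change-of-basis action of `Uₙ^r` iff it is a polynomial in the
diagonal entries; i.e. `ℂ[F•Rep(Q,β)]^{𝕌_β} = ℂ[𝔱ₙ^{⊕(r-1)}]`. -/
theorem semiInvariants_filtered_Dr_Dynkin_quiver
    (n r : ℕ) (hn : 1 ≤ n) (hr : 4 ≤ r)
    (tl hd : Fin (r - 1) → Fin r)
    (hor : ∀ α : Fin (r - 1),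
      ((α : ℕ) < r - 2 →
        (((tl α : ℕ) = (α : ℕ) ∧ (hd α : ℕ) = (α : ℕ) + 1) ∨
         ((tl α : ℕ) = (α : ℕ) + 1 ∧ (hd α : ℕ) = (α : ℕ)))) ∧
      ((α : ℕ) = r - 2 →
        (((tl α : ℕ) = r - 3 ∧ (hd α : ℕ) = r - 1) ∨
         ((tl α : ℕ) = r - 1 ∧ (hd α : ℕ) = r - 3))))
    (f : (Fin (r - 1) → Matrix (Fin n) (Fin n) ℂ) → ℂ)
    (hf : ∃ P : MvPolynomial (Fin (r - 1) × Fin n × Fin n) ℂ,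
      ∀ A, f A = MvPolynomial.eval (fun q => A q.1 q.2.1 q.2.2) P) :
    (∀ u : Fin r → Matrix (Fin n) (Fin n) ℂ, (∀ v, IsUnipUT (u v)) →
        ∀ A : Fin (r - 1) → Matrix (Fin n) (Fin n) ℂ, (∀ α, IsUT (A α)) →
          f (fun α => u (hd α) * A α * (u (tl α))⁻¹) = f A) ↔
      ∃ g : MvPolynomial (Fin (r - 1) × Fin n) ℂ,
        ∀ A : Fin (r - 1) → Matrix (Fin n) (Fin n) ℂ, (∀ α, IsUT (A α)) →
          f A = MvPolynomial.eval (fun q => A q.1 q.2 q.2) g := by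
  constructor
  · intro hinv
    obtain ⟨P, hP⟩ := hf
    set σ1 : Fin (r - 1) × Fin n × Fin n → MvPolynomial (Fin (r - 1) × Fin n) ℂ :=
      fun q => if q.2.1 = q.2.2 then X (q.1, q.2.1) else 0 with hσ1
    refine ⟨bind₁ σ1 P, ?_⟩
    -- Step 1: the claim holds when all diagonal entries are nonzero
    have keyA : ∀ A : Fin (r - 1) → Matrix (Fin n) (Fin n) ℂ, (∀ α, IsUT (A α)) →
        (∀ α i, A α i i ≠ 0) →
        f A = eval (fun p => A p.1 p.2 p.2) (bind₁ σ1 P) := by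
      intro A hA hA0
      have hstep := hinv (fun v => uV r hr hd A (v : ℕ))
        (fun v => uV_unip hr hA hA0 (v : ℕ)) A hA
      have hDiag : (fun α => uV r hr hd A ((hd α : Fin r) : ℕ) * A α *
          (uV r hr hd A ((tl α : Fin r) : ℕ))⁻¹) = fun α => Dm (A α) :=
        funext fun α => uV_rel hr hor hA hA0 α
      have h1 : f A = f (fun α => Dm (A α)) := by rw [← hstep, hDiag]
      rw [h1, hP, eval_bind₁']
      have hfun : (fun q : Fin (r - 1) × Fin n × Fin n => Dm (A q.1) q.2.1 q.2.2) =
          (fun q => eval (fun p : Fin (r - 1) × Fin n => A p.1 p.2 p.2) (σ1 q)) := by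
        funext q
        by_cases h : q.2.1 = q.2.2 <;> simp [hσ1, h, Dm_apply]
      rw [hfun]
    -- Step 2: Zariski density
    set Q1 : MvPolynomial (Fin (r - 1) × Fin n × Fin n) ℂ :=
      bind₁ (fun q => if q.2.2 < q.2.1 then 0 else X q) P with hQ1def
    set Q2 : MvPolynomial (Fin (r - 1) × Fin n × Fin n) ℂ :=
      bind₁ (fun p : Fin (r - 1) × Fin n => X (p.1, p.2, p.2)) (bind₁ σ1 P) with hQ2def
    have hQ1 : ∀ x : Fin (r - 1) × Fin n × Fin n → ℂ, eval x Q1 =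
        f (fun α => Matrix.of (fun i j => if j < i then (0 : ℂ) else x (α, i, j))) := by
      intro x
      rw [hP, hQ1def, eval_bind₁']
      have hfun : (fun q : Fin (r - 1) × Fin n × Fin n =>
          eval x (if q.2.2 < q.2.1 then 0 else X q)) =
          (fun q : Fin (r - 1) × Fin n × Fin n =>
            Matrix.of (fun i j => if j < i then (0 : ℂ) else x (q.1, i, j)) q.2.1 q.2.2) := by
        funext q
        by_cases h : q.2.2 < q.2.1 <;> simp [h]
      rw [hfun]
    have hQ2 : ∀ x : Fin (r - 1) × Fin n × Fin n → ℂ, eval x Q2 =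
        eval (fun p => x (p.1, p.2, p.2)) (bind₁ σ1 P) := by
      intro x
      rw [hQ2def, eval_bind₁']
      have hfun : (fun q : Fin (r - 1) × Fin n => eval x (X (q.1, q.2, q.2))) =
          (fun q : Fin (r - 1) × Fin n => x (q.1, q.2, q.2)) := by
        funext q
        simp
      rw [hfun]
    have hAgree : ∀ x : Fin (r - 1) × Fin n × Fin n → ℂ,
        (∀ α i, x (α, i, i) ≠ 0) → eval x Q1 = eval x Q2 := by
      intro x hx
      rw [hQ1, hQ2]
      have hUT : ∀ α : Fin (r - 1),
          IsUT (Matrix.of (fun i j => if j < i then (0 : ℂ) else x (α, i, j))) := by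
        intro α i j hij
        simp [Matrix.of_apply, hij]
      have hne : ∀ (α : Fin (r - 1)) (i : Fin n),
          (Matrix.of (fun i j => if j < i then (0 : ℂ) else x (α, i, j))) i i ≠ 0 := by
        intro α i
        simpa [Matrix.of_apply] using hx α i
      rw [keyA _ hUT hne]
      have hfun : (fun p : Fin (r - 1) × Fin n =>
          Matrix.of (fun i j => if j < i then (0 : ℂ) else x (p.1, i, j)) p.2 p.2) =
          (fun p : Fin (r - 1) × Fin n => x (p.1, p.2, p.2)) := by
        funext p
        simp [Matrix.of_apply, lt_irrefl]
      rw [hfun]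
    have hmul0 : (∏ p : Fin (r - 1) × Fin n, (X (p.1, p.2, p.2) :
        MvPolynomial (Fin (r - 1) × Fin n × Fin n) ℂ)) * (Q1 - Q2) = 0 := by
      apply MvPolynomial.funext
      intro x
      rw [map_mul, map_sub, map_zero]
      by_cases hx : ∀ α i, x (α, i, i) ≠ 0
      · rw [hAgree x hx, sub_self, mul_zero]
      · push_neg at hx
        obtain ⟨α, i, h0⟩ := hx
        have : eval x (∏ p : Fin (r - 1) × Fin n, (X (p.1, p.2, p.2) :
            MvPolynomial (Fin (r - 1) × Fin n × Fin n) ℂ)) = 0 := by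
          rw [map_prod]
          exact Finset.prod_eq_zero (Finset.mem_univ (α, i)) (by simpa using h0)
        rw [this, zero_mul]
    have hmne : (∏ p : Fin (r - 1) × Fin n, (X (p.1, p.2, p.2) :
        MvPolynomial (Fin (r - 1) × Fin n × Fin n) ℂ)) ≠ 0 :=
      Finset.prod_ne_zero_iff.mpr fun p _ => MvPolynomial.X_ne_zero _
    have hQ12 : Q1 = Q2 := by
      rcases mul_eq_zero.mp hmul0 with h | h
      · exact absurd h hmne
      · exact sub_eq_zero.mp h
    -- Step 3: conclusion for all upper triangular tuples
    intro A hA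
    set x : Fin (r - 1) × Fin n × Fin n → ℂ := fun q => A q.1 q.2.1 q.2.2 with hxdef
    have hAx : (fun α => Matrix.of (fun i j => if j < i then (0 : ℂ) else x (α, i, j))) = A := by
      funext α
      ext i j
      by_cases h : j < i
      · simp [Matrix.of_apply, h, hA α i j h]
      · simp [Matrix.of_apply, h, hxdef]
    calc f A = eval x Q1 := by rw [hQ1, hAx]
      _ = eval x Q2 := by rw [hQ12]
      _ = eval (fun q => A q.1 q.2 q.2) (bind₁ σ1 P) := by rw [hQ2]
  · rintro ⟨g, hg⟩ u hu A hA
    have hUT : ∀ α, IsUT (u (hd α) * A α * (u (tl α))⁻¹) := fun α =>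
      utMul (utMul (hu (hd α)).1 (hA α)) (unipInv (hu (tl α))).1
    rw [hg _ hUT, hg A hA]
    have hfun : (fun q : Fin (r - 1) × Fin n =>
        (u (hd q.1) * A q.1 * (u (tl q.1))⁻¹) q.2 q.2) =
        (fun q : Fin (r - 1) × Fin n => A q.1 q.2 q.2) := by
      funext p
      rw [mul_diag (utMul (hu (hd p.1)).1 (hA p.1)) (unipInv (hu (tl p.1))).1,
        mul_diag (hu (hd p.1)).1 (hA p.1), (hu (hd p.1)).2, (unipInv (hu (tl p.1))).2,
        one_mul, mul_one]
    rw [hfun]
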